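/- Let A be an integral NDA and let (w, q_u, q_l) be a recoverable gap with respect to z such that gap_{q_u,q_l}(w) > M. Then A_[q_u→_f α](z) < ∞ and A_[q_l→_f α](z) = ∞, i.e., there is an accepting run of A on z starting in q_u but no accepting run of A on z starting in q_l. -/

import Mathlib

/-- A nondeterministic integral discounted-sum automaton (NDA) over alphabet `σ`
with state type `Q`. -/
structure NDA (σ : Type) (Q : Type) where
  init : Set Q
  acc : Set Q
  delta : Set (Q × σ × Q)
  val : Q × σ × Q → ℕ
  fval : Q → ℕ
  lam : ℕ
  one_lt_lam : 1 < lam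

namespace NDA

variable {σ Q : Type}

/-- The adjacency (transition) condition for a sequence of states along the word `w`. -/
def Steps (A : NDA σ Q) (w : List σ) (ρ : ℕ → Q) : Prop :=
  ∀ i : Fin w.length, (ρ (i : ℕ), w.get i, ρ ((i : ℕ) + 1)) ∈ A.delta

/-- A run of `A` on `w`: starts in an initial state and follows transitions. -/
def IsRun (A : NDA σ Q) (w : List σ) (ρ : ℕ → Q) : Prop :=
  ρ 0 ∈ A.init ∧ A.Steps w ρ

/-- A run of `A` on `w` starting in the state `q`. -/
def IsRunFrom (A : NDA σ Q) (q : Q) (w : List σ) (ρ : ℕ → Q) : Prop :=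
  ρ 0 = q ∧ A.Steps w ρ

/-- The discounted weight of the sequence of states `ρ` along the word `w`. -/
def runVal (A : NDA σ Q) (w : List σ) (ρ : ℕ → Q) : ℚ :=
  ∑ i : Fin w.length,
    ((A.lam : ℚ)⁻¹) ^ (i : ℕ) * (A.val (ρ (i : ℕ), w.get i, ρ ((i : ℕ) + 1)) : ℚ)

/-- `A_[P→P'](w)`: minimal weight of a run on `w` from `P` to `P'` (`⊤` if none). -/
noncomputable def minVal (A : NDA σ Q) (P P' : Set Q) (w : List σ) : EReal :=
  sInf {x : EReal | ∃ ρ : ℕ → Q, ρ 0 ∈ P ∧ A.Steps w ρ ∧ ρ w.length ∈ P' ∧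
    x = ((A.runVal w ρ : ℝ) : EReal)}

/-- `A_[P→_f P'](w)`: minimal weight including the final weight of an accepting
run on `w` from `P` ending in `P' ∩ α` (`⊤` if none). -/
noncomputable def minValF (A : NDA σ Q) (P P' : Set Q) (w : List σ) : EReal :=
  sInf {x : EReal | ∃ ρ : ℕ → Q, ρ 0 ∈ P ∧ A.Steps w ρ ∧ ρ w.length ∈ P' ∩ A.acc ∧
    x = (((A.runVal w ρ + ((A.lam : ℚ)⁻¹) ^ w.length * (A.fval (ρ w.length) : ℚ) : ℚ) : ℝ) : EReal)}

/-- `A*(w)`: the value of the word `w`. -/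
noncomputable def starVal (A : NDA σ Q) (w : List σ) : EReal :=
  A.minValF A.init Set.univ w

/-- `(w, qu, ql)` is a recoverable gap with respect to `z`. -/
def RecGap (A : NDA σ Q) (w z : List σ) (qu ql : Q) : Prop :=
  A.minVal A.init {ql} w ≤ A.minVal A.init {qu} w ∧
  A.minVal A.init {qu} w +
      ((((A.lam : ℝ)⁻¹) ^ w.length : ℝ) : EReal) * A.minValF {qu} Set.univ z
    = A.starVal (w ++ z) ∧
  A.starVal (w ++ z) < ⊤

/-- `gap_{qu,ql}(w) = λ^{|w|}·(A_[Q₀→qu](w) − A_[Q₀→ql](w))`: the size of a gap. -/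
noncomputable def gapSize (A : NDA σ Q) (w : List σ) (qu ql : Q) : EReal :=
  (((A.lam : ℝ) ^ w.length : ℝ) : EReal) *
    (A.minVal A.init {qu} w - A.minVal A.init {ql} w)

/-- The set of sizes of recoverable gaps of `A`. -/
def gapSizes (A : NDA σ Q) : Set EReal :=
  {g | ∃ w z qu ql, A.RecGap w z qu ql ∧ g = A.gapSize w qu ql}

/-- `A` is deterministic (a DDA). -/
def Deterministic (A : NDA σ Q) : Prop :=
  (∃! q, q ∈ A.init) ∧ ∀ p s, {q | (p, s, q) ∈ A.delta}.Subsingleton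

/-- `A` is determinizable: it has an equivalent DDA over the same alphabet with
the same discounting factor. -/
def Determinizable (A : NDA σ Q) : Prop :=
  ∃ (Q' : Type) (_ : Fintype Q') (D : NDA σ Q'),
    D.Deterministic ∧ D.lam = A.lam ∧ ∀ w : List σ, A.starVal w = D.starVal w

/-- `m_A`: the maximal transition weight or final weight of `A`. -/
noncomputable def mA (A : NDA σ Q) [Fintype σ] [Fintype Q] : ℕ :=
  max ((Set.toFinite A.delta).toFinset.sup A.val)
      ((Set.toFinite A.acc).toFinset.sup A.fval)

/-- `M = 2·(λ/(λ−1))·m_A`. -/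
noncomputable def M (A : NDA σ Q) [Fintype σ] [Fintype Q] : ℚ :=
  2 * ((A.lam : ℚ) / ((A.lam : ℚ) - 1)) * (A.mA : ℚ)

/-- `Γ` of the length-`i` prefix of a run on `w`: `λ^i` times its weight. -/
def gammaPfx (A : NDA σ Q) (w : List σ) (ρ : ℕ → Q) (i : ℕ) : ℚ :=
  (A.lam : ℚ) ^ i * A.runVal (w.take i) ρ

/-- `𝒩 = λ^{|Q|²·2^{|Q|²}}·((|Q|−2)·M) + M`. -/
noncomputable def calN (A : NDA σ Q) [Fintype σ] [Fintype Q] : ℚ :=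
  (A.lam : ℚ) ^ ((Fintype.card Q) ^ 2 * 2 ^ ((Fintype.card Q) ^ 2)) *
      (((Fintype.card Q : ℚ) - 2) * A.M) + A.M

/-- `C = (λ/(λ−1))·(𝒩·|Q| + 2·m_A)`. -/
noncomputable def calC (A : NDA σ Q) [Fintype σ] [Fintype Q] : ℚ :=
  ((A.lam : ℚ) / ((A.lam : ℚ) - 1)) * (A.calN * (Fintype.card Q : ℚ) + 2 * (A.mA : ℚ))

/-- `w` has the `n`-separation property with respect to `(U, L, qu, z)`. -/
def SepPropWith (A : NDA σ Q) (n : ℚ) (w : List σ) (U L : Set Q) (qu : Q) (z : List σ) : Prop :=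
  U ∪ L = Set.univ ∧ Disjoint U L ∧ U.Nonempty ∧ L.Nonempty ∧
  (∀ qu' ∈ U, ∀ ql ∈ L,
    (((A.lam : ℝ) ^ w.length : ℝ) : EReal) *
        (A.minVal A.init {qu'} w - A.minVal A.init {ql} w) > ((n : ℝ) : EReal)) ∧
  qu ∈ U ∧ ∀ ql ∈ L, A.RecGap w z qu ql

/-- `w` has the `n`-separation property. -/
def SepProp (A : NDA σ Q) (n : ℚ) (w : List σ) : Prop :=
  ∃ U L qu z, A.SepPropWith n w U L qu z


lemma runVal_nonneg (A : NDA σ Q) (w : List σ) (ρ : ℕ → Q) : 0 ≤ A.runVal w ρ :=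
  Finset.sum_nonneg fun i _ => by positivity

lemma val_le_mA [Fintype σ] [Fintype Q] (A : NDA σ Q) {t} (ht : t ∈ A.delta) :
    A.val t ≤ A.mA :=
  le_max_of_le_left (Finset.le_sup ((Set.Finite.mem_toFinset _).2 ht))

lemma fval_le_mA [Fintype σ] [Fintype Q] (A : NDA σ Q) {q} (hq : q ∈ A.acc) :
    A.fval q ≤ A.mA :=
  le_max_of_le_right (Finset.le_sup ((Set.Finite.mem_toFinset _).2 hq))

lemma geom_aux {q : ℚ} (hq : 1 < q) (n : ℕ) :
    ∑ i : Fin n, q⁻¹ ^ (i : ℕ) ≤ q / (q - 1) := by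
  have h0 : (0:ℚ) < q := by linarith
  have h1 : (0:ℚ) < q - 1 := by linarith
  induction n with
  | zero => simp; positivity
  | succ n ih =>
    rw [Fin.sum_univ_succ]
    have e1 : ∑ i : Fin n, q⁻¹ ^ ((i : ℕ) + 1) = q⁻¹ * ∑ i : Fin n, q⁻¹ ^ (i : ℕ) := by
      rw [Finset.mul_sum]; exact Finset.sum_congr rfl fun i _ => by ring
    simp only [Fin.val_zero, pow_zero, Fin.val_succ, e1]
    have h2 : q⁻¹ * ∑ i : Fin n, q⁻¹ ^ (i : ℕ) ≤ q⁻¹ * (q / (q - 1)) :=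
      mul_le_mul_of_nonneg_left ih (by positivity)
    have h3 : q⁻¹ * (q / (q - 1)) = 1 / (q - 1) := by field_simp
    have h4 : 1 + 1 / (q - 1) = q / (q - 1) := by field_simp; ring
    linarith

lemma acc_run_le_M [Fintype σ] [Fintype Q] (A : NDA σ Q) (z : List σ) (ρ : ℕ → Q)
    (hs : A.Steps z ρ) (ha : ρ z.length ∈ A.acc) :
    A.runVal z ρ + ((A.lam : ℚ)⁻¹) ^ z.length * (A.fval (ρ z.length) : ℚ) ≤ A.M := by
  have hq : (1:ℚ) < (A.lam : ℚ) := by exact_mod_cast A.one_lt_lam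
  have h0 : (0:ℚ) < (A.lam : ℚ) := by linarith
  have hL : (1:ℚ) ≤ (A.lam : ℚ) / ((A.lam : ℚ) - 1) := by
    rw [le_div_iff₀ (by linarith)]; linarith
  have hrun : A.runVal z ρ ≤ (A.mA : ℚ) * ((A.lam : ℚ) / ((A.lam : ℚ) - 1)) := by
    calc A.runVal z ρ ≤ ∑ i : Fin z.length, ((A.lam : ℚ)⁻¹) ^ (i : ℕ) * (A.mA : ℚ) := by
          refine Finset.sum_le_sum fun i _ => ?_
          refine mul_le_mul_of_nonneg_left ?_ (by positivity)
          exact_mod_cast A.val_le_mA (hs i)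
      _ = (∑ i : Fin z.length, ((A.lam : ℚ)⁻¹) ^ (i : ℕ)) * (A.mA : ℚ) :=
          (Finset.sum_mul _ _ _).symm
      _ ≤ ((A.lam : ℚ) / ((A.lam : ℚ) - 1)) * (A.mA : ℚ) :=
          mul_le_mul_of_nonneg_right (geom_aux hq _) (by positivity)
      _ = (A.mA : ℚ) * ((A.lam : ℚ) / ((A.lam : ℚ) - 1)) := mul_comm _ _
  have hfin : ((A.lam : ℚ)⁻¹) ^ z.length * (A.fval (ρ z.length) : ℚ) ≤ (A.mA : ℚ) := by
    have hp1 : ((A.lam : ℚ)⁻¹) ^ z.length ≤ 1 :=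
      pow_le_one₀ (by positivity) (by rw [inv_le_one_iff₀]; right; linarith)
    calc ((A.lam : ℚ)⁻¹) ^ z.length * (A.fval (ρ z.length) : ℚ)
        ≤ 1 * (A.fval (ρ z.length) : ℚ) := mul_le_mul_of_nonneg_right hp1 (by positivity)
      _ = (A.fval (ρ z.length) : ℚ) := one_mul _
      _ ≤ (A.mA : ℚ) := by exact_mod_cast A.fval_le_mA ha
  have hmA : (0:ℚ) ≤ (A.mA : ℚ) := by positivity
  unfold M
  nlinarith

def concatRun (w : List σ) (ρ₁ ρ₂ : ℕ → Q) : ℕ → Q :=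
  fun i => if i < w.length then ρ₁ i else ρ₂ (i - w.length)

lemma concat_left (w : List σ) (ρ₁ ρ₂ : ℕ → Q) (hmid : ρ₂ 0 = ρ₁ w.length)
    {j : ℕ} (hj : j ≤ w.length) : concatRun w ρ₁ ρ₂ j = ρ₁ j := by
  unfold concatRun
  rcases lt_or_eq_of_le hj with h | h
  · simp [h]
  · simp [h, hmid]

lemma concat_right (w : List σ) (ρ₁ ρ₂ : ℕ → Q) (j : ℕ) :
    concatRun w ρ₁ ρ₂ (w.length + j) = ρ₂ j := by
  unfold concatRun
  simp

lemma concat_steps (A : NDA σ Q) (w z : List σ) (ρ₁ ρ₂ : ℕ → Q)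
    (h1 : A.Steps w ρ₁) (h2 : A.Steps z ρ₂) (hmid : ρ₂ 0 = ρ₁ w.length) :
    A.Steps (w ++ z) (concatRun w ρ₁ ρ₂) := by
  intro i
  have hi : (i : ℕ) < w.length + z.length := by simpa using i.isLt
  rcases lt_or_ge (i : ℕ) w.length with h | h
  · have e1 : concatRun w ρ₁ ρ₂ i = ρ₁ i := concat_left w ρ₁ ρ₂ hmid h.le
    have e2 : concatRun w ρ₁ ρ₂ ((i : ℕ) + 1) = ρ₁ ((i : ℕ) + 1) := concat_left w ρ₁ ρ₂ hmid h
    have e3 : (w ++ z).get i = w.get ⟨i, h⟩ := by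
      simp only [List.get_eq_getElem]
      exact List.getElem_append_left h
    rw [e1, e2, e3]; exact h1 ⟨(i : ℕ), h⟩
  · have hjz : (i : ℕ) - w.length < z.length := by omega
    have hij : (i : ℕ) = w.length + ((i : ℕ) - w.length) := by omega
    have e1 : concatRun w ρ₁ ρ₂ i = ρ₂ ((i : ℕ) - w.length) := by
      conv_lhs => rw [hij]
      exact concat_right w ρ₁ ρ₂ _
    have e2 : concatRun w ρ₁ ρ₂ ((i : ℕ) + 1) = ρ₂ ((i : ℕ) - w.length + 1) := by
      have : (i : ℕ) + 1 = w.length + ((i : ℕ) - w.length + 1) := by omega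
      rw [this]
      exact concat_right w ρ₁ ρ₂ _
    have e3 : (w ++ z).get i = z.get ⟨(i : ℕ) - w.length, hjz⟩ := by
      simp only [List.get_eq_getElem]
      exact List.getElem_append_right h
    rw [e1, e2, e3]; exact h2 ⟨(i : ℕ) - w.length, hjz⟩

lemma concat_runVal (A : NDA σ Q) (w z : List σ) (ρ₁ ρ₂ : ℕ → Q)
    (hmid : ρ₂ 0 = ρ₁ w.length) :
    A.runVal (w ++ z) (concatRun w ρ₁ ρ₂)
      = A.runVal w ρ₁ + ((A.lam : ℚ)⁻¹) ^ w.length * A.runVal z ρ₂ := by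
  have hlen : (w ++ z).length = w.length + z.length := by simp
  have key : A.runVal (w ++ z) (concatRun w ρ₁ ρ₂) =
      ∑ i : Fin (w.length + z.length),
        ((A.lam : ℚ)⁻¹) ^ (i : ℕ) *
          (A.val (concatRun w ρ₁ ρ₂ (i : ℕ), (w ++ z)[(i : ℕ)]'(by omega), concatRun w ρ₁ ρ₂ ((i : ℕ) + 1)) : ℚ) := by
    unfold runVal
    refine Fintype.sum_equiv (finCongr hlen) _ _ fun i => ?_
    simp [List.get_eq_getElem]
  rw [key, Fin.sum_univ_add]
  congr 1
  · unfold runVal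
    refine Finset.sum_congr rfl fun i _ => ?_
    have hle : (i : ℕ) + 1 ≤ w.length := i.isLt
    have e0 : ((Fin.castAdd z.length i : Fin (w.length + z.length)) : ℕ) = (i : ℕ) := rfl
    simp only [e0]
    rw [concat_left w ρ₁ ρ₂ hmid i.isLt.le, concat_left w ρ₁ ρ₂ hmid hle]
    simp [List.get_eq_getElem, List.getElem_append_left i.isLt]
  · unfold runVal
    rw [Finset.mul_sum]
    refine Finset.sum_congr rfl fun j _ => ?_
    have e0 : ((Fin.natAdd w.length j : Fin (w.length + z.length)) : ℕ) = w.length + (j : ℕ) := rfl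
    simp only [e0]
    have e1 : concatRun w ρ₁ ρ₂ (w.length + (j : ℕ)) = ρ₂ (j : ℕ) := concat_right w ρ₁ ρ₂ _
    have e2 : concatRun w ρ₁ ρ₂ (w.length + (j : ℕ) + 1) = ρ₂ ((j : ℕ) + 1) := by
      have : w.length + (j : ℕ) + 1 = w.length + ((j : ℕ) + 1) := by omega
      rw [this]; exact concat_right w ρ₁ ρ₂ _
    have e3 : (w ++ z)[w.length + (j : ℕ)]'(by omega) = z[(j : ℕ)]'(j.isLt) := by
      rw [List.getElem_append_right (Nat.le_add_right _ _)]
      simp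
    rw [e1, e2, e3, pow_add, mul_assoc]
    simp [List.get_eq_getElem]

lemma minVal_nonneg (A : NDA σ Q) (P P' : Set Q) (w : List σ) : 0 ≤ A.minVal P P' w := by
  refine le_sInf ?_
  rintro x ⟨ρ, -, -, -, rfl⟩
  exact EReal.coe_nonneg.2 (by exact_mod_cast A.runVal_nonneg w ρ)

lemma minValF_nonneg (A : NDA σ Q) (P P' : Set Q) (w : List σ) : 0 ≤ A.minValF P P' w := by
  refine le_sInf ?_
  rintro x ⟨ρ, -, -, -, rfl⟩
  refine EReal.coe_nonneg.2 ?_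
  have h : (0:ℚ) ≤ A.runVal w ρ + ((A.lam : ℚ)⁻¹) ^ w.length * (A.fval (ρ w.length) : ℚ) :=
    add_nonneg (A.runVal_nonneg w ρ) (by positivity)
  exact_mod_cast h


end NDA

/-- In a recoverable gap of size larger than `M`, the suffix `z` admits an
accepting run from `q_u` but no accepting run from `q_l`. -/
theorem large_recoverable_gap_lower_run_dies {σ Q : Type} [Fintype σ] [Fintype Q]
    (A : NDA σ Q) (w z : List σ) (qu ql : Q)
    (hgap : A.RecGap w z qu ql)
    (hlarge : A.gapSize w qu ql > ((A.M : ℝ) : EReal)) :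
    A.minValF {qu} Set.univ z < ⊤ ∧ A.minValF {ql} Set.univ z = ⊤ := by
  obtain ⟨hba, heq, hStop⟩ := hgap
  have hq1 : (1:ℝ) < (A.lam : ℝ) := by exact_mod_cast A.one_lt_lam
  have hc : (0:ℝ) < ((A.lam : ℝ)⁻¹) ^ w.length := by positivity
  have ha0 := A.minVal_nonneg A.init {qu} w
  have hb0 := A.minVal_nonneg A.init {ql} w
  have hFu0 := A.minValF_nonneg {qu} Set.univ z
  have ha_bot : A.minVal A.init {qu} w ≠ ⊥ := fun h => by simp [h] at ha0
  have hb_bot : A.minVal A.init {ql} w ≠ ⊥ := fun h => by simp [h] at hb0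
  have hFu_bot : A.minValF {qu} Set.univ z ≠ ⊥ := fun h => by simp [h] at hFu0
  -- Part 1
  have hFu_top : A.minValF {qu} Set.univ z ≠ ⊤ := by
    intro h
    rw [h, EReal.coe_mul_top_of_pos hc, EReal.add_top_of_ne_bot ha_bot] at heq
    exact absurd (heq ▸ hStop) (lt_irrefl _)
  refine ⟨lt_top_iff_ne_top.2 hFu_top, ?_⟩
  -- Part 2
  by_contra hFl
  have hFl' : A.minValF {ql} Set.univ z < ⊤ := lt_top_iff_ne_top.2 hFl
  unfold NDA.minValF at hFl'
  obtain ⟨x, ⟨ρ₂, hρ₂0, hs2, hend2, rfl⟩, -⟩ := sInf_lt_iff.1 hFl'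
  have hacc2 : ρ₂ z.length ∈ A.acc := hend2.2
  set v : ℚ := A.runVal z ρ₂ + ((A.lam : ℚ)⁻¹) ^ z.length * (A.fval (ρ₂ z.length) : ℚ) with hvdef
  have hvM : v ≤ A.M := A.acc_run_le_M z ρ₂ hs2 hacc2
  -- the relevant quantities are all real
  set fu := (A.minValF {qu} Set.univ z).toReal with hfudef
  have hfu : ((fu : ℝ) : EReal) = A.minValF {qu} Set.univ z := EReal.coe_toReal hFu_top hFu_bot
  have hfu0 : (0:ℝ) ≤ fu := by
    rw [← hfu] at hFu0; exact_mod_cast hFu0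
  have ha_top : A.minVal A.init {qu} w ≠ ⊤ := by
    intro h
    rw [h, ← hfu, ← EReal.coe_mul, EReal.top_add_of_ne_bot (EReal.coe_ne_bot _)] at heq
    exact absurd (heq ▸ hStop) (lt_irrefl _)
  have hb_top : A.minVal A.init {ql} w ≠ ⊤ := fun h => ha_top (top_le_iff.1 (h ▸ hba))
  set aR := (A.minVal A.init {qu} w).toReal with haRdef
  set bR := (A.minVal A.init {ql} w).toReal with hbRdef
  have haa : ((aR : ℝ) : EReal) = A.minVal A.init {qu} w := EReal.coe_toReal ha_top ha_bot
  have hbb : ((bR : ℝ) : EReal) = A.minVal A.init {ql} w := EReal.coe_toReal hb_top hb_bot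
  rw [← haa, ← hfu, ← EReal.coe_mul, ← EReal.coe_add] at heq
  -- translate the gap hypothesis to the reals
  rw [NDA.gapSize, ← haa, ← hbb, ← EReal.coe_sub, ← EReal.coe_mul] at hlarge
  have hM : (A.M : ℝ) < (A.lam : ℝ) ^ w.length * (aR - bR) := EReal.coe_lt_coe_iff.1 hlarge
  have hcL : ((A.lam : ℝ)⁻¹) ^ w.length * (A.lam : ℝ) ^ w.length = 1 := by
    rw [← mul_pow, inv_mul_cancel₀ (by linarith), one_pow]
  have h5 : ((A.lam : ℝ)⁻¹) ^ w.length * (A.M : ℝ)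
      < ((A.lam : ℝ)⁻¹) ^ w.length * ((A.lam : ℝ) ^ w.length * (aR - bR)) :=
    mul_lt_mul_of_pos_left hM hc
  have h6 : ((A.lam : ℝ)⁻¹) ^ w.length * ((A.lam : ℝ) ^ w.length * (aR - bR)) = aR - bR := by
    rw [← mul_assoc, hcL, one_mul]
  set D : ℝ := aR - bR - ((A.lam : ℝ)⁻¹) ^ w.length * (A.M : ℝ) with hDdef
  have hD : 0 < D := by rw [hDdef]; linarith
  -- pick a run to ql of weight close to the infimum
  have hblt : A.minVal A.init {ql} w < ((bR + D / 2 : ℝ) : EReal) := by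
    rw [← hbb]; exact EReal.coe_lt_coe_iff.2 (by linarith)
  unfold NDA.minVal at hblt
  obtain ⟨x, ⟨ρ₁, h10, hs1, hend1, rfl⟩, hxlt⟩ := sInf_lt_iff.1 hblt
  have hr1 : ((A.runVal w ρ₁ : ℚ) : ℝ) < bR + D / 2 := EReal.coe_lt_coe_iff.1 hxlt
  have hmid : ρ₂ 0 = ρ₁ w.length := by
    rw [Set.mem_singleton_iff] at hρ₂0 hend1; rw [hρ₂0, hend1]
  -- concatenate the runs
  have hle : A.starVal (w ++ z)
      ≤ (((A.runVal w ρ₁ + ((A.lam : ℚ)⁻¹) ^ w.length * v : ℚ) : ℝ) : EReal) := by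
    unfold NDA.starVal NDA.minValF
    refine sInf_le ⟨NDA.concatRun w ρ₁ ρ₂, ?_, A.concat_steps w z ρ₁ ρ₂ hs1 hs2 hmid, ?_, ?_⟩
    · rw [NDA.concat_left w ρ₁ ρ₂ hmid (Nat.zero_le _)]; exact h10
    · have hzl : (w ++ z).length = w.length + z.length := by simp
      rw [hzl, NDA.concat_right w ρ₁ ρ₂ z.length]
      exact ⟨trivial, hacc2⟩
    · have hzl : (w ++ z).length = w.length + z.length := by simp
      have e1 : NDA.concatRun w ρ₁ ρ₂ ((w ++ z).length) = ρ₂ z.length := by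
        rw [hzl]; exact NDA.concat_right w ρ₁ ρ₂ z.length
      congr 1
      rw [A.concat_runVal w z ρ₁ ρ₂ hmid, e1, hzl, pow_add, hvdef]
      push_cast
      ring
  rw [NDA.starVal] at heq
  rw [NDA.starVal, ← heq] at hle
  have hfin : aR + ((A.lam : ℝ)⁻¹) ^ w.length * fu
      ≤ ((A.runVal w ρ₁ + ((A.lam : ℚ)⁻¹) ^ w.length * v : ℚ) : ℝ) :=
    EReal.coe_le_coe_iff.1 hle
  have hcast : ((A.runVal w ρ₁ + ((A.lam : ℚ)⁻¹) ^ w.length * v : ℚ) : ℝ)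
      = ((A.runVal w ρ₁ : ℚ) : ℝ) + ((A.lam : ℝ)⁻¹) ^ w.length * ((v : ℚ) : ℝ) := by
    push_cast; ring
  rw [hcast] at hfin
  have hvle : ((v : ℚ) : ℝ) ≤ (A.M : ℝ) := by exact_mod_cast hvM
  have hcv : ((A.lam : ℝ)⁻¹) ^ w.length * ((v : ℚ) : ℝ)
      ≤ ((A.lam : ℝ)⁻¹) ^ w.length * (A.M : ℝ) := mul_le_mul_of_nonneg_left hvle hc.le
  have hafu : (0:ℝ) ≤ ((A.lam : ℝ)⁻¹) ^ w.length * fu := mul_nonneg hc.le hfu0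
  rw [hDdef] at hD
  linarith
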